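/- arXiv:1404.7638 — 2 statements merged into one kernel-verified Lean document; each statement's English description precedes it below -/
import Mathlib

section
/- A subset transfer with respect to an item a at position k and a set S of items preceding a uses exactly Σ_{s ∈ S} (k − pos(s) − |{s' ∈ S : s' is between s and a}|) adjacent transpositions; equivalently, its cost equals the number of pairs (s, b) with s ∈ S, b ∉ S ∪ {a} is strictly between s and a in the list, plus |S| (the swaps of each s past a). Concretely, the cost of the subset transfer equals the number of inversions created between the original list and the resulting list. -/
open Finset

variable {α : Type*} [DecidableEq α] [Inhabited α]

/-- Swap the items at adjacent positions `i` and `i+1` (0-indexed). -/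
def swapAdj (i : ℕ) (L : List α) : List α :=
  if i + 1 < L.length then
    (L.set i (L.getD (i+1) default)).set (i+1) (L.getD i default)
  else L

/-- Apply a sequence of adjacent transpositions (given by their positions). -/
def applySwaps (ops : List ℕ) (L : List α) : List α :=
  ops.foldl (fun M i => swapAdj i M) L

/-- Element transfer: move the item at position `k` to position `j` (0-indexed),
leaving the relative order of all other items unchanged. -/
def elemTransfer (k j : ℕ) (L : List α) : List α :=
  (L.eraseIdx k).insertIdx j (L.getD k default)

/-- Subset transfer: move the items of `S` (a subset of the items preceding `a`)
to immediately after `a`, preserving relative orders. -/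
def subsetTransfer (a : α) (S : Finset α) (L : List α) : List α :=
  ((L.take (L.idxOf a)).filter (fun x => x ∉ S)) ++ [a]
    ++ ((L.take (L.idxOf a)).filter (fun x => x ∈ S)) ++ L.drop (L.idxOf a + 1)

/-- Number of inversions between two orderings of the same items: the number of
(unordered) pairs whose relative order differs. -/
def invCount (L M : List α) : ℕ :=
  ((L.toFinset ×ˢ L.toFinset).filter
    (fun p => L.idxOf p.1 < L.idxOf p.2 ∧ M.idxOf p.2 < M.idxOf p.1)).card

open List

set_option linter.unusedSectionVars false
set_option linter.deprecated false

set_option linter.unusedSectionVars false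



lemma indexOf_lt_of_sublist {l l' : List α} (hs : l' <+ l) (hnd : l.Nodup)
    {x y : α} (hx : x ∈ l') (hy : y ∈ l')
    (h : l.idxOf x < l.idxOf y) : l'.idxOf x < l'.idxOf y := by
  induction hs with
  | slnil => simp at hx
  | @cons l₁ l₂ c hs ih =>
      have hc : c ∉ l₂ := (List.nodup_cons.1 hnd).1
      have hx2 : x ∈ l₂ := hs.subset hx
      have hy2 : y ∈ l₂ := hs.subset hy
      rw [List.idxOf_cons_ne _ (fun hcx => hc (by rw [hcx]; exact hx2)),
          List.idxOf_cons_ne _ (fun hcy => hc (by rw [hcy]; exact hy2))] at h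
      exact ih (List.nodup_cons.1 hnd).2 hx hy (Nat.lt_of_succ_lt_succ h)
  | @cons_cons l₁ l₂ c hs ih =>
      by_cases hyc : y = c
      · subst hyc
        rw [List.idxOf_cons_self] at h; omega
      · by_cases hxc : x = c
        · subst hxc
          rw [List.idxOf_cons_self, List.idxOf_cons_ne _ (Ne.symm hyc)]
          omega
        · have hx1 : x ∈ l₁ := (List.mem_cons.1 hx).resolve_left hxc
          have hy1 : y ∈ l₁ := (List.mem_cons.1 hy).resolve_left hyc
          rw [List.idxOf_cons_ne _ (Ne.symm hxc), List.idxOf_cons_ne _ (Ne.symm hyc)] at h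
          rw [List.idxOf_cons_ne _ (Ne.symm hxc), List.idxOf_cons_ne _ (Ne.symm hyc)]
          exact Nat.succ_lt_succ (ih (List.nodup_cons.1 hnd).2 hx1 hy1 (Nat.lt_of_succ_lt_succ h))

lemma mem_take_iff_indexOf {l : List α} (hnd : l.Nodup) {z : α} (hz : z ∈ l) (k : ℕ) :
    z ∈ l.take k ↔ l.idxOf z < k := by
  constructor
  · intro h
    obtain ⟨i, hi, hzi⟩ := List.getElem_of_mem h
    have hi' : i < l.length := lt_of_lt_of_le hi (by simp [List.length_take])
    have : (l.take k)[i] = l[i] := List.getElem_take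
    rw [this] at hzi
    rw [← hzi, List.Nodup.idxOf_getElem hnd i hi']
    simp [List.length_take] at hi
    exact hi.1
  · intro h
    have hi : l.idxOf z < l.length := List.idxOf_lt_length_iff.2 hz
    have h2 : l.idxOf z < (l.take k).length := by simp [List.length_take]; omega
    have : (l.take k)[l.idxOf z] = l[l.idxOf z] := List.getElem_take
    have hz2 : l[l.idxOf z] = z := List.getElem_idxOf hi
    rw [← hz2]
    rw [← this]
    exact List.getElem_mem _

lemma mem_drop_iff_indexOf {l : List α} (hnd : l.Nodup) {z : α} (hz : z ∈ l) (k : ℕ) :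
    z ∈ l.drop k ↔ k ≤ l.idxOf z := by
  constructor
  · intro h
    obtain ⟨i, hi, hzi⟩ := List.getElem_of_mem h
    have hi' : k + i < l.length := by simp [List.length_drop] at hi; omega
    have : (l.drop k)[i] = l[k + i] := List.getElem_drop
    rw [this] at hzi
    rw [← hzi, List.Nodup.idxOf_getElem hnd _ hi']
    omega
  · intro h
    have hi : l.idxOf z < l.length := List.idxOf_lt_length_iff.2 hz
    have h2 : l.idxOf z - k < (l.drop k).length := by simp [List.length_drop]; omega
    have : (l.drop k)[l.idxOf z - k] = l[k + (l.idxOf z - k)] := List.getElem_drop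
    have e : k + (l.idxOf z - k) = l.idxOf z := by omega
    have hz2 : l[l.idxOf z] = z := List.getElem_idxOf hi
    have : (l.drop k)[l.idxOf z - k] = z := by
      rw [this]
      simp only [e]
      exact hz2
    rw [← this]
    exact List.getElem_mem _



lemma list_decomp {L : List α} {t : ℕ} (h : t + 1 < L.length) :
    L = L.take t ++ L[t]'(by omega) :: L[t+1] :: L.drop (t+2) := by
  conv_lhs => rw [← List.take_append_drop t L]
  congr 1
  rw [← List.cons_getElem_drop_succ (n := t) (h := by omega),
      ← List.cons_getElem_drop_succ (n := t+1) (h := h)]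

lemma swapAdj_eq {L : List α} {t : ℕ} (h : t + 1 < L.length) :
    swapAdj t L = L.take t ++ L[t+1] :: (L[t]'(by omega)) :: L.drop (t+2) := by
  have ht : t < L.length := by omega
  rw [swapAdj, if_pos h, List.getD_eq_getElem _ _ h, List.getD_eq_getElem _ _ ht]
  have hlt : (L.take t).length = t := by simp [List.length_take]; omega
  apply List.ext_getElem
  · simp [List.length_set, List.length_drop, hlt]
    omega
  · intro i h1 h2
    rw [List.length_set, List.length_set] at h1
    rw [List.getElem_set, List.getElem_set, List.getElem_append]
    rcases lt_trichotomy i t with hi | rfl | hi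
    · rw [if_neg (by omega), if_neg (by omega), dif_pos (by omega)]
      exact (List.getElem_take).symm
    · rw [if_neg (by omega), if_pos rfl, dif_neg (by omega)]
      have e : i - (L.take i).length = 0 := by omega
      simp only [e, List.getElem_cons_zero]
    · rw [dif_neg (by omega)]
      by_cases hi2 : i = t + 1
      · subst hi2
        rw [if_pos rfl]
        simp only [List.length_take]
        have e2 : t + 1 - min t L.length = 1 := by omega
        simp only [e2, List.getElem_cons_succ, List.getElem_cons_zero]
      · rw [if_neg (by omega), if_neg (by omega)]
        obtain ⟨j, rfl⟩ : ∃ j, i = t + 2 + j := ⟨i - t - 2, by omega⟩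
        have e2 : t + 2 + j - (L.take t).length = j + 2 := by rw [hlt]; omega
        simp only [e2, List.getElem_cons_succ]
        rw [List.getElem_drop]

lemma swapAdj_perm (t : ℕ) (L : List α) : swapAdj t L ~ L := by
  by_cases h : t + 1 < L.length
  · rw [swapAdj_eq h]
    conv_rhs => rw [list_decomp h]
    exact List.Perm.append_left _ (List.Perm.swap _ _ _)
  · rw [swapAdj, if_neg h]

section SwapIdx

variable {L : List α} {t : ℕ}

lemma swapAdj_nodup (hnd : L.Nodup) : (swapAdj t L).Nodup :=
  (swapAdj_perm t L).symm.nodup hnd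

lemma aux_nodup_facts (hnd : L.Nodup) (h : t + 1 < L.length) :
    (L[t]'(by omega)) ∉ L.take t ∧ L[t+1] ∉ L.take t ∧ (L[t]'(by omega)) ≠ L[t+1] := by
  have := hnd
  rw [list_decomp h, List.nodup_append] at this
  obtain ⟨h1, h2, h3⟩ := this
  refine ⟨fun hx => h3 _ hx _ (List.mem_cons_self) rfl,
    fun hy => h3 _ hy _ (List.mem_cons.2 (Or.inr (List.mem_cons_self))) rfl, ?_⟩
  have hne := (List.nodup_cons.1 h2).1
  exact fun e => hne (by rw [e]; exact List.mem_cons_self)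

lemma indexOf_swapAdj_left (hnd : L.Nodup) (h : t + 1 < L.length) :
    (swapAdj t L).idxOf (L[t]'(by omega)) = t + 1 := by
  obtain ⟨hx, hy, hxy⟩ := aux_nodup_facts hnd h
  rw [swapAdj_eq h, List.idxOf_append_of_notMem hx,
      List.idxOf_cons_ne _ (Ne.symm hxy), List.idxOf_cons_self]
  simp [List.length_take]
  omega

lemma indexOf_swapAdj_right (hnd : L.Nodup) (h : t + 1 < L.length) :
    (swapAdj t L).idxOf L[t+1] = t := by
  obtain ⟨hx, hy, hxy⟩ := aux_nodup_facts hnd h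
  rw [swapAdj_eq h, List.idxOf_append_of_notMem hy, List.idxOf_cons_self]
  simp [List.length_take]
  omega

lemma indexOf_swapAdj_other (hnd : L.Nodup) (h : t + 1 < L.length) {z : α}
    (hz1 : z ≠ L[t]'(by omega)) (hz2 : z ≠ L[t+1]) :
    (swapAdj t L).idxOf z = L.idxOf z := by
  rw [swapAdj_eq h]
  conv_rhs => rw [list_decomp h]
  by_cases hzt : z ∈ L.take t
  · rw [List.idxOf_append_of_mem hzt, List.idxOf_append_of_mem hzt]
  · rw [List.idxOf_append_of_notMem hzt, List.idxOf_append_of_notMem hzt,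
        List.idxOf_cons_ne _ (Ne.symm hz1), List.idxOf_cons_ne _ (Ne.symm hz2),
        List.idxOf_cons_ne _ (Ne.symm hz2), List.idxOf_cons_ne _ (Ne.symm hz1)]

end SwapIdx


lemma invCount_self (M : List α) : invCount M M = 0 := by
  rw [invCount, Finset.card_eq_zero, Finset.filter_eq_empty_iff]
  rintro p hp ⟨h1, h2⟩
  omega


lemma swap_indexOf_iff {L : List α} {t : ℕ} (hnd : L.Nodup) (h : t + 1 < L.length) {x y u v : α}
    (hx : L[t]'(Nat.lt_of_succ_lt h) = x) (hy : L[t+1] = y)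
    (hu : u ∈ L) (hv : v ∈ L)
    (h1 : ¬(u = x ∧ v = y)) (h2 : ¬(u = y ∧ v = x)) :
    ((swapAdj t L).idxOf u < (swapAdj t L).idxOf v ↔ L.idxOf u < L.idxOf v) := by
  have ht : t < L.length := by omega
  have hxmem : x ∈ L := hx ▸ List.getElem_mem ht
  have hymem : y ∈ L := hy ▸ List.getElem_mem h
  have hLx : L.idxOf x = t := by rw [← hx]; exact List.Nodup.idxOf_getElem hnd t ht
  have hLy : L.idxOf y = t + 1 := by rw [← hy]; exact List.Nodup.idxOf_getElem hnd (t+1) h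
  have hSx : (swapAdj t L).idxOf x = t + 1 := by rw [← hx]; exact indexOf_swapAdj_left hnd h
  have hSy : (swapAdj t L).idxOf y = t := by rw [← hy]; exact indexOf_swapAdj_right hnd h
  have hxy : x ≠ y := by rw [← hx, ← hy]; exact (aux_nodup_facts hnd h).2.2
  have hother : ∀ z : α, z ∈ L → z ≠ x → z ≠ y →
      (swapAdj t L).idxOf z = L.idxOf z ∧ L.idxOf z ≠ t ∧ L.idxOf z ≠ t + 1 := by
    intro z hz hz1 hz2
    refine ⟨indexOf_swapAdj_other hnd h (fun e => hz1 (e.trans hx)) (fun e => hz2 (e.trans hy)),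
      fun e => hz1 ((List.idxOf_inj hz).1 (by rw [e, hLx])),
      fun e => hz2 ((List.idxOf_inj hz).1 (by rw [e, hLy]))⟩
  by_cases hux : u = x
  · subst hux
    by_cases hvy : v = y
    · exact absurd ⟨rfl, hvy⟩ h1
    · by_cases hvx : v = u
      · simp [hvx]
      · obtain ⟨e1, e2, e3⟩ := hother v hv hvx hvy
        rw [e1, hSx, hLx]
        omega
  · by_cases huy : u = y
    · subst huy
      by_cases hvx : v = x
      · exact absurd ⟨rfl, hvx⟩ h2
      · by_cases hvy : v = u
        · simp [hvy]
        · obtain ⟨e1, e2, e3⟩ := hother v hv hvx hvy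
          rw [e1, hSy, hLy]
          omega
    · obtain ⟨e1, e2, e3⟩ := hother u hu hux huy
      by_cases hvx : v = x
      · subst hvx; rw [e1, hSx, hLx]; omega
      · by_cases hvy : v = y
        · subst hvy; rw [e1, hSy, hLy]; omega
        · obtain ⟨f1, f2, f3⟩ := hother v hv hvx hvy
          rw [e1, f1]

section SwapCount

variable {M L : List α} {t : ℕ} {x y : α}

lemma invCount_split (N M : List α) (x y : α) :
    invCount N M =
      ((N.toFinset ×ˢ N.toFinset).filter
        (fun p => (N.idxOf p.1 < N.idxOf p.2 ∧ M.idxOf p.2 < M.idxOf p.1)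
          ∧ (p = (x, y) ∨ p = (y, x)))).card
      + ((N.toFinset ×ˢ N.toFinset).filter
        (fun p => (N.idxOf p.1 < N.idxOf p.2 ∧ M.idxOf p.2 < M.idxOf p.1)
          ∧ ¬(p = (x, y) ∨ p = (y, x)))).card := by
  rw [invCount,
    ← Finset.card_filter_add_card_filter_not (p := fun p => p = (x, y) ∨ p = (y, x)),
    Finset.filter_filter, Finset.filter_filter]

lemma card_P_le (N M : List α) {x y : α} (hxy : N.idxOf x < N.idxOf y) :
    ((N.toFinset ×ˢ N.toFinset).filter
      (fun p => (N.idxOf p.1 < N.idxOf p.2 ∧ M.idxOf p.2 < M.idxOf p.1)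
        ∧ (p = (x, y) ∨ p = (y, x)))).card ≤ 1 := by
  rw [← Finset.card_singleton (x, y)]
  apply Finset.card_le_card
  rintro ⟨u, v⟩ hp
  rw [Finset.mem_filter] at hp
  obtain ⟨-, ⟨hlt, -⟩, h' | h'⟩ := hp
  · simpa using h'
  · rw [Prod.mk.injEq] at h'
    obtain ⟨rfl, rfl⟩ := h'
    dsimp only at hlt
    omega

lemma filter_negP_eq (hnd : L.Nodup) (h : t + 1 < L.length)
    (hx : L[t]'(Nat.lt_of_succ_lt h) = x) (hy : L[t+1] = y) (M : List α) :
    ((L.toFinset ×ˢ L.toFinset).filter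
      (fun p => (L.idxOf p.1 < L.idxOf p.2 ∧ M.idxOf p.2 < M.idxOf p.1)
        ∧ ¬(p = (x, y) ∨ p = (y, x))))
    = (((swapAdj t L).toFinset ×ˢ (swapAdj t L).toFinset).filter
      (fun p => ((swapAdj t L).idxOf p.1 < (swapAdj t L).idxOf p.2
        ∧ M.idxOf p.2 < M.idxOf p.1)
        ∧ ¬(p = (x, y) ∨ p = (y, x)))) := by
  have htf : (swapAdj t L).toFinset = L.toFinset :=
    List.toFinset_eq_of_perm _ _ (swapAdj_perm t L)
  rw [htf]
  apply Finset.filter_congr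
  rintro ⟨u, v⟩ hp
  simp only [Finset.mem_product, List.mem_toFinset] at hp
  by_cases hPp : ((u, v) = (x, y) ∨ (u, v) = (y, x))
  · constructor <;> (rintro ⟨-, hc⟩; exact absurd hPp hc)
  · have h1 : ¬(u = x ∧ v = y) := fun ⟨e1, e2⟩ => hPp (Or.inl (by rw [e1, e2]))
    have h2 : ¬(u = y ∧ v = x) := fun ⟨e1, e2⟩ => hPp (Or.inr (by rw [e1, e2]))
    have hiff := swap_indexOf_iff hnd h hx hy hp.1 hp.2 h1 h2
    constructor
    · rintro ⟨⟨ha1, ha2⟩, hc⟩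
      exact ⟨⟨hiff.2 ha1, ha2⟩, hc⟩
    · rintro ⟨⟨ha1, ha2⟩, hc⟩
      exact ⟨⟨hiff.1 ha1, ha2⟩, hc⟩

lemma invCount_le_swapAdj (M : List α) (hnd : L.Nodup) (t : ℕ) :
    invCount L M ≤ invCount (swapAdj t L) M + 1 := by
  by_cases h : t + 1 < L.length
  case neg => rw [swapAdj, if_neg h]; omega
  obtain ⟨x, hx⟩ : ∃ x, L[t]'(Nat.lt_of_succ_lt h) = x := ⟨_, rfl⟩
  obtain ⟨y, hy⟩ : ∃ y, L[t+1] = y := ⟨_, rfl⟩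
  have hLx : L.idxOf x = t := by rw [← hx]; exact List.Nodup.idxOf_getElem hnd t (by omega)
  have hLy : L.idxOf y = t + 1 := by rw [← hy]; exact List.Nodup.idxOf_getElem hnd (t+1) h
  have hs1 := invCount_split L M x y
  have hs2 := invCount_split (swapAdj t L) M x y
  have hone := card_P_le L M (x := x) (y := y) (by omega)
  have hrest := filter_negP_eq hnd h hx hy M
  rw [hrest] at hs1
  omega

lemma invCount_swapAdj_succ (M : List α) (hnd : L.Nodup) (h : t + 1 < L.length)
    (hx : L[t]'(Nat.lt_of_succ_lt h) = x) (hy : L[t+1] = y)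
    (hinv : M.idxOf y < M.idxOf x) :
    invCount (swapAdj t L) M + 1 = invCount L M := by
  have ht : t < L.length := by omega
  have hxmem : x ∈ L := hx ▸ List.getElem_mem ht
  have hymem : y ∈ L := hy ▸ List.getElem_mem h
  have hLx : L.idxOf x = t := by rw [← hx]; exact List.Nodup.idxOf_getElem hnd t ht
  have hLy : L.idxOf y = t + 1 := by rw [← hy]; exact List.Nodup.idxOf_getElem hnd (t+1) h
  have hSx : (swapAdj t L).idxOf x = t + 1 := by rw [← hx]; exact indexOf_swapAdj_left hnd h
  have hSy : (swapAdj t L).idxOf y = t := by rw [← hy]; exact indexOf_swapAdj_right hnd h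
  have hs1 := invCount_split L M x y
  have hs2 := invCount_split (swapAdj t L) M x y
  have hrest := filter_negP_eq hnd h hx hy M
  rw [hrest] at hs1
  have hone : ((L.toFinset ×ˢ L.toFinset).filter
      (fun p => (L.idxOf p.1 < L.idxOf p.2 ∧ M.idxOf p.2 < M.idxOf p.1)
        ∧ (p = (x, y) ∨ p = (y, x)))).card = 1 := by
    rw [Finset.card_eq_one]
    refine ⟨(x, y), ?_⟩
    ext ⟨u, v⟩
    rw [Finset.mem_filter, Finset.mem_singleton]
    constructor
    · rintro ⟨-, ⟨hlt, -⟩, h' | h'⟩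
      · exact h'
      · rw [Prod.mk.injEq] at h'
        obtain ⟨rfl, rfl⟩ := h'
        dsimp only at hlt
        omega
    · rintro h'
      rw [Prod.mk.injEq] at h'
      obtain ⟨rfl, rfl⟩ := h'
      refine ⟨Finset.mem_product.2 ⟨List.mem_toFinset.2 hxmem, List.mem_toFinset.2 hymem⟩,
        ⟨by dsimp only; omega, hinv⟩, Or.inl rfl⟩
  have hzero : (((swapAdj t L).toFinset ×ˢ (swapAdj t L).toFinset).filter
      (fun p => ((swapAdj t L).idxOf p.1 < (swapAdj t L).idxOf p.2
        ∧ M.idxOf p.2 < M.idxOf p.1)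
        ∧ (p = (x, y) ∨ p = (y, x)))).card = 0 := by
    rw [Finset.card_eq_zero, Finset.filter_eq_empty_iff]
    rintro ⟨u, v⟩ hp ⟨⟨hlt1, hlt2⟩, h' | h'⟩ <;> rw [Prod.mk.injEq] at h' <;>
      obtain ⟨rfl, rfl⟩ := h' <;> dsimp only at hlt1 hlt2
    · rw [hSx, hSy] at hlt1; omega
    · omega
  omega

end SwapCount


lemma eq_of_invCount_zero {L M : List α} (hnd : L.Nodup) (hp : L ~ M)
    (h : invCount L M = 0) : L = M := by
  have hlen : L.length = M.length := hp.length_eq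
  have hmono : ∀ u v, u ∈ L → v ∈ L → L.idxOf u < L.idxOf v →
      M.idxOf u < M.idxOf v := by
    intro u v hu hv huv
    rw [invCount, Finset.card_eq_zero, Finset.filter_eq_empty_iff] at h
    have hnot := h (show (u, v) ∈ L.toFinset ×ˢ L.toFinset from Finset.mem_product.2
      ⟨List.mem_toFinset.2 hu, List.mem_toFinset.2 hv⟩)
    dsimp only at hnot
    have huvne : u ≠ v := by
      intro e; rw [e] at huv; omega
    have hne : M.idxOf u ≠ M.idxOf v :=
      fun e => huvne ((List.idxOf_inj (hp.subset hu)).1 e)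
    rw [not_and] at hnot
    have := hnot huv
    omega
  have hlenpos : ∀ i, i < L.length → ∀ hi : i < L.length, M.idxOf (L[i]'hi) < L.length := by
    intro i _ hi
    rw [hlen]
    exact List.idxOf_lt_length_iff.2 (hp.subset (List.getElem_mem hi))
  set f : Fin L.length → Fin L.length :=
    fun i => ⟨M.idxOf (L[i.1]'i.2), hlenpos i.1 i.2 i.2⟩ with hf
  have hmonof : StrictMono f := by
    intro i j hij
    have hiu : L.idxOf (L[i.1]'i.2) = i.1 := List.Nodup.idxOf_getElem hnd _ _
    have hju : L.idxOf (L[j.1]'j.2) = j.1 := List.Nodup.idxOf_getElem hnd _ _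
    exact hmono _ _ (List.getElem_mem _) (List.getElem_mem _) (by rw [hiu, hju]; exact hij)
  have hfid : f = id := by
    apply (StrictMono.range_inj hmonof strictMono_id).1
    rw [Set.range_id]
    exact Set.range_eq_univ.2 (Finite.injective_iff_surjective.1 hmonof.injective)
  apply List.ext_getElem hlen
  intro i h1 h2
  have hidx : M.idxOf (L[i]'h1) = i := congrArg Fin.val (congrFun hfid ⟨i, h1⟩)
  have hm : M.idxOf (L[i]'h1) < M.length :=
    List.idxOf_lt_length_iff.2 (hp.subset (List.getElem_mem h1))
  have e := List.getElem_idxOf hm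
  simp only [hidx] at e
  exact e.symm

lemma exists_desc {L M : List α} (hnd : L.Nodup) (hp : L ~ M) (h : invCount L M ≠ 0) :
    ∃ t, ∃ ht : t + 1 < L.length,
      M.idxOf L[t+1] < M.idxOf (L[t]'(Nat.lt_of_succ_lt ht)) := by
  by_contra hc
  push_neg at hc
  have hchain : List.IsChain (fun u v => M.idxOf u < M.idxOf v) L := by
    rw [List.isChain_iff_getElem]
    intro i hi
    have hlt : i + 1 < L.length := by omega
    have hle := hc i hlt
    have hne : L[i]'(Nat.lt_of_succ_lt hlt) ≠ L[i+1] := by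
      intro e
      have e1 : L.idxOf (L[i]'(Nat.lt_of_succ_lt hlt)) = i := List.Nodup.idxOf_getElem hnd _ _
      have e2 : L.idxOf L[i+1] = i + 1 := List.Nodup.idxOf_getElem hnd _ _
      rw [e] at e1
      omega
    have hneM : M.idxOf (L[i]'(Nat.lt_of_succ_lt hlt)) ≠ M.idxOf L[i+1] :=
      fun e2 => hne ((List.idxOf_inj (hp.subset (List.getElem_mem _))).1 e2)
    omega
  haveI : IsTrans α (fun u v => M.idxOf u < M.idxOf v) :=
    ⟨fun _ _ _ hab hbc => lt_trans hab hbc⟩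
  have hpw := List.isChain_iff_pairwise.1 hchain
  apply h
  rw [invCount, Finset.card_eq_zero, Finset.filter_eq_empty_iff]
  rintro ⟨u, v⟩ hmem ⟨h1, h2⟩
  simp only [Finset.mem_product, List.mem_toFinset] at hmem
  dsimp only at h1 h2
  have hpair := List.pairwise_iff_get.1 hpw ⟨L.idxOf u, List.idxOf_lt_length_iff.2 hmem.1⟩
      ⟨L.idxOf v, List.idxOf_lt_length_iff.2 hmem.2⟩ (Fin.mk_lt_mk.2 h1)
  simp only [List.get_eq_getElem] at hpair
  rw [List.getElem_idxOf, List.getElem_idxOf] at hpair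
  omega

lemma exists_ops (M : List α) : ∀ (n : ℕ) (L : List α), L.Nodup → L ~ M → invCount L M = n →
    ∃ ops : List ℕ, ops.length = n ∧ applySwaps ops L = M := by
  intro n
  induction n with
  | zero =>
      intro L hnd hp h
      exact ⟨[], rfl, eq_of_invCount_zero hnd hp h⟩
  | succ n ih =>
      intro L hnd hp h
      obtain ⟨t, ht, hinv⟩ := exists_desc hnd hp (by omega)
      have hswap := invCount_swapAdj_succ M hnd ht rfl rfl hinv
      have hnd' : (swapAdj t L).Nodup := swapAdj_nodup hnd
      have hperm' : swapAdj t L ~ M := (swapAdj_perm t L).trans hp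
      obtain ⟨ops, hlen, happ⟩ := ih (swapAdj t L) hnd' hperm' (by omega)
      refine ⟨t :: ops, by simp [hlen], ?_⟩
      rw [applySwaps, List.foldl_cons]
      exact happ

lemma lower_bound (M : List α) : ∀ (ops : List ℕ) (L : List α), L.Nodup →
    applySwaps ops L = M → invCount L M ≤ ops.length := by
  intro ops
  induction ops with
  | nil =>
      intro L hnd happ
      rw [applySwaps, List.foldl_nil] at happ
      subst happ
      rw [invCount_self]
      exact Nat.zero_le _
  | cons t ops ih =>
      intro L hnd happ
      rw [applySwaps, List.foldl_cons] at happ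
      have h1 := ih (swapAdj t L) (swapAdj_nodup hnd) happ
      have h2 := invCount_le_swapAdj M hnd t
      simp only [List.length_cons]
      omega


section Transfer

variable {L : List α} {a : α} {S : Finset α}

lemma subsetTransfer_perm (hnd : L.Nodup) (ha : a ∈ L) :
    subsetTransfer a S L ~ L := by
  have hkl : L.idxOf a < L.length := List.idxOf_lt_length_iff.2 ha
  have hdrop : L.drop (L.idxOf a) = a :: L.drop (L.idxOf a + 1) := by
    rw [← List.cons_getElem_drop_succ (n := L.idxOf a) (h := hkl)]
    congr 1
    exact List.getElem_idxOf hkl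
  have hBalt : (L.take (L.idxOf a)).filter (fun x => x ∈ S)
      = (L.take (L.idxOf a)).filter (fun x => !(decide (x ∉ S))) := by
    apply List.filter_congr
    intro x _
    by_cases h : x ∈ S <;> simp [h]
  have hAB : ((L.take (L.idxOf a)).filter (fun x => x ∉ S))
      ++ ((L.take (L.idxOf a)).filter (fun x => x ∈ S)) ~ L.take (L.idxOf a) := by
    rw [hBalt]
    exact List.filter_append_perm _ _
  calc subsetTransfer a S L
      = ((L.take (L.idxOf a)).filter (fun x => x ∉ S))
        ++ ([a] ++ (((L.take (L.idxOf a)).filter (fun x => x ∈ S))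
          ++ L.drop (L.idxOf a + 1))) := by
        rw [subsetTransfer]
        simp [List.append_assoc]
    _ ~ ((L.take (L.idxOf a)).filter (fun x => x ∉ S))
        ++ (((L.take (L.idxOf a)).filter (fun x => x ∈ S))
          ++ ([a] ++ L.drop (L.idxOf a + 1))) :=
        List.Perm.append_left _ (List.perm_append_comm_assoc _ _ _)
    _ = (((L.take (L.idxOf a)).filter (fun x => x ∉ S))
        ++ ((L.take (L.idxOf a)).filter (fun x => x ∈ S)))
          ++ ([a] ++ L.drop (L.idxOf a + 1)) := by rw [List.append_assoc]
    _ ~ L.take (L.idxOf a) ++ ([a] ++ L.drop (L.idxOf a + 1)) :=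
        List.Perm.append_right _ hAB
    _ = L.take (L.idxOf a) ++ L.drop (L.idxOf a) := by
        rw [List.singleton_append, ← hdrop]
    _ = L := List.take_append_drop _ _

end Transfer

section Transfer2

variable {L : List α} {a : α} {S : Finset α}

set_option maxHeartbeats 1000000 in
lemma transfer_indexOf_iff (hnd : L.Nodup) (ha : a ∈ L)
    (hS : ∀ s ∈ S, s ∈ L ∧ L.idxOf s < L.idxOf a)
    {x y : α} (hx : x ∈ L) (hy : y ∈ L) (hxy : L.idxOf x < L.idxOf y) :
    ((subsetTransfer a S L).idxOf y < (subsetTransfer a S L).idxOf x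
      ↔ x ∈ S ∧ (y = a ∨ (y ∉ S ∧ L.idxOf y < L.idxOf a))) := by
  have hkl : L.idxOf a < L.length := List.idxOf_lt_length_iff.2 ha
  have hM : subsetTransfer a S L
      = ((((L.take (L.idxOf a)).filter (fun x => x ∉ S)) ++ [a])
          ++ ((L.take (L.idxOf a)).filter (fun x => x ∈ S)))
        ++ L.drop (L.idxOf a + 1) := rfl
  set k := L.idxOf a with hk
  set A := (L.take k).filter (fun x => x ∉ S) with hA
  set B := (L.take k).filter (fun x => x ∈ S) with hB
  set C := L.drop (k + 1) with hC
  rw [hM]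
  have hsubA : ∀ z, z ∈ A → z ∈ L ∧ L.idxOf z < k ∧ z ∉ S := by
    intro z hz
    rw [hA, List.mem_filter] at hz
    have hzL : z ∈ L := (List.take_sublist _ _).subset hz.1
    exact ⟨hzL, (mem_take_iff_indexOf hnd hzL k).1 hz.1, by simpa using hz.2⟩
  have hsubB : ∀ z, z ∈ B → z ∈ L ∧ L.idxOf z < k ∧ z ∈ S := by
    intro z hz
    rw [hB, List.mem_filter] at hz
    have hzL : z ∈ L := (List.take_sublist _ _).subset hz.1
    exact ⟨hzL, (mem_take_iff_indexOf hnd hzL k).1 hz.1, by simpa using hz.2⟩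
  have hsubC : ∀ z, z ∈ C → z ∈ L ∧ k + 1 ≤ L.idxOf z := by
    intro z hz
    rw [hC] at hz
    have hzL : z ∈ L := (List.drop_sublist _ _).subset hz
    exact ⟨hzL, (mem_drop_iff_indexOf hnd hzL (k+1)).1 hz⟩
  have hmemA : ∀ z, z ∈ L → L.idxOf z < k → z ∉ S → z ∈ A := by
    intro z hz h1 h2
    rw [hA, List.mem_filter]
    exact ⟨(mem_take_iff_indexOf hnd hz k).2 h1, by simpa using h2⟩
  have hmemB : ∀ z, z ∈ L → L.idxOf z < k → z ∈ S → z ∈ B := by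
    intro z hz h1 h2
    rw [hB, List.mem_filter]
    exact ⟨(mem_take_iff_indexOf hnd hz k).2 h1, by simpa using h2⟩
  have hmemC : ∀ z, z ∈ L → k < L.idxOf z → z ∈ C := by
    intro z hz h1
    rw [hC]
    exact (mem_drop_iff_indexOf hnd hz (k+1)).2 h1
  have hanotin : a ∉ S := fun h => absurd (hS a h).2 (lt_irrefl _)
  have haA : a ∉ A := fun h => absurd (hsubA a h).2.1 (lt_irrefl k)
  have haB : a ∉ B := fun h => absurd (hsubB a h).2.1 (lt_irrefl k)
  have haC : a ∉ C := fun h => by have := (hsubC a h).2; omega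
  have hidxA : ∀ z, z ∈ A → (((A ++ [a]) ++ B) ++ C).idxOf z = A.idxOf z
      ∧ A.idxOf z < A.length := by
    intro z hz
    rw [List.idxOf_append_of_mem (List.mem_append_left _ (List.mem_append_left _ hz)),
        List.idxOf_append_of_mem (List.mem_append_left _ hz),
        List.idxOf_append_of_mem hz]
    exact ⟨rfl, List.idxOf_lt_length_iff.2 hz⟩
  have hidxa : (((A ++ [a]) ++ B) ++ C).idxOf a = A.length := by
    rw [List.idxOf_append_of_mem
          (List.mem_append_left _ (List.mem_append_right _ (by simp))),
        List.idxOf_append_of_mem (List.mem_append_right _ (by simp)),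
        List.idxOf_append_of_notMem haA, List.idxOf_cons_self]
    omega
  have hidxB : ∀ z, z ∈ B → (((A ++ [a]) ++ B) ++ C).idxOf z
      = A.length + 1 + B.idxOf z ∧ B.idxOf z < B.length := by
    intro z hz
    have hzS := (hsubB z hz).2.2
    have hzA : z ∉ A := fun h => (hsubA z h).2.2 hzS
    have hza : z ≠ a := fun e => haB (e ▸ hz)
    have hznot : z ∉ A ++ [a] := by
      simp only [List.mem_append, List.mem_singleton]
      rintro (h | h)
      · exact hzA h
      · exact hza h
    have hlen1 : (A ++ [a]).length = A.length + 1 := by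
      simp [List.length_append]
    rw [List.idxOf_append_of_mem (List.mem_append_right _ hz),
        List.idxOf_append_of_notMem hznot, hlen1]
    exact ⟨rfl, List.idxOf_lt_length_iff.2 hz⟩
  have hidxC : ∀ z, z ∈ C → (((A ++ [a]) ++ B) ++ C).idxOf z
      = A.length + 1 + B.length + C.idxOf z := by
    intro z hz
    obtain ⟨hzL, hzk⟩ := hsubC z hz
    have hzA : z ∉ A := fun h => by have := (hsubA z h).2.1; omega
    have hzB : z ∉ B := fun h => by have := (hsubB z h).2.1; omega
    have hza : z ≠ a := fun e => haC (e ▸ hz)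
    have hznot : z ∉ (A ++ [a]) ++ B := by
      simp only [List.mem_append, List.mem_singleton]
      rintro ((h | h) | h)
      · exact hzA h
      · exact hza h
      · exact hzB h
    have hlen2 : ((A ++ [a]) ++ B).length = A.length + 1 + B.length := by
      simp [List.length_append]
      omega
    rw [List.idxOf_append_of_notMem hznot, hlen2]
  have hordA : ∀ u v, u ∈ A → v ∈ A → L.idxOf u < L.idxOf v
      → A.idxOf u < A.idxOf v := fun u v hu hv h =>
    indexOf_lt_of_sublist ((List.filter_sublist).trans (List.take_sublist _ _)) hnd hu hv h
  have hordB : ∀ u v, u ∈ B → v ∈ B → L.idxOf u < L.idxOf v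
      → B.idxOf u < B.idxOf v := fun u v hu hv h =>
    indexOf_lt_of_sublist ((List.filter_sublist).trans (List.take_sublist _ _)) hnd hu hv h
  have hordC : ∀ u v, u ∈ C → v ∈ C → L.idxOf u < L.idxOf v
      → C.idxOf u < C.idxOf v := fun u v hu hv h =>
    indexOf_lt_of_sublist (List.drop_sublist _ _) hnd hu hv h
  rcases lt_trichotomy (L.idxOf x) k with hxk | hxk | hxk
  · by_cases hxS : x ∈ S
    · have hxB : x ∈ B := hmemB x hx hxk hxS
      obtain ⟨hMx, hBx⟩ := hidxB x hxB
      rcases lt_trichotomy (L.idxOf y) k with hyk | hyk | hyk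
      · by_cases hyS : y ∈ S
        · have hyB := hmemB y hy hyk hyS
          obtain ⟨hMy, -⟩ := hidxB y hyB
          have hord := hordB x y hxB hyB hxy
          apply iff_of_false
          · rw [hMx, hMy]; omega
          · rintro ⟨-, rfl | ⟨hyS', -⟩⟩
            · omega
            · exact hyS' hyS
        · have hyA := hmemA y hy hyk hyS
          obtain ⟨hMy, hAy⟩ := hidxA y hyA
          apply iff_of_true
          · rw [hMx, hMy]; omega
          · exact ⟨hxS, Or.inr ⟨hyS, hyk⟩⟩
      · have hya : y = a := (List.idxOf_inj hy).1 (hyk.trans hk)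
        subst hya
        apply iff_of_true
        · rw [hMx, hidxa]; omega
        · exact ⟨hxS, Or.inl rfl⟩
      · have hyC := hmemC y hy hyk
        have hMy := hidxC y hyC
        apply iff_of_false
        · rw [hMx, hMy]; omega
        · rintro ⟨-, rfl | ⟨-, hyk'⟩⟩
          · omega
          · omega
    · have hxA := hmemA x hx hxk hxS
      obtain ⟨hMx, hAx⟩ := hidxA x hxA
      apply iff_of_false ?_ (fun h => hxS h.1)
      rcases lt_trichotomy (L.idxOf y) k with hyk | hyk | hyk
      · by_cases hyS : y ∈ S
        · obtain ⟨hMy, -⟩ := hidxB y (hmemB y hy hyk hyS)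
          rw [hMx, hMy]; omega
        · have hyA := hmemA y hy hyk hyS
          obtain ⟨hMy, -⟩ := hidxA y hyA
          have hord := hordA x y hxA hyA hxy
          rw [hMx, hMy]; omega
      · have hya : y = a := (List.idxOf_inj hy).1 (hyk.trans hk)
        subst hya
        rw [hMx, hidxa]; omega
      · have hMy := hidxC y (hmemC y hy hyk)
        rw [hMx, hMy]; omega
  · have hxa : x = a := (List.idxOf_inj hx).1 (hxk.trans hk)
    subst hxa
    have hyk : k < L.idxOf y := by omega
    have hMy := hidxC y (hmemC y hy hyk)
    apply iff_of_false
    · rw [hidxa, hMy]; omega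
    · rintro ⟨haS, -⟩
      exact hanotin haS
  · have hxC := hmemC x hx hxk
    have hyC := hmemC y hy (by omega)
    have hMx := hidxC x hxC
    have hMy := hidxC y hyC
    have hord := hordC x y hxC hyC hxy
    apply iff_of_false
    · rw [hMx, hMy]; omega
    · rintro ⟨hxS', -⟩
      have := (hS x hxS').2
      omega

end Transfer2

section Counting

variable {L : List α} {a : α} {S : Finset α}

lemma invCount_transfer_eq2 (hnd : L.Nodup) (ha : a ∈ L)
    (hS : ∀ s ∈ S, s ∈ L ∧ L.idxOf s < L.idxOf a) :
    invCount L (subsetTransfer a S L)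
      = ((S ×ˢ (L.toFinset \ insert a S)).filter
          (fun p => L.idxOf p.1 < L.idxOf p.2 ∧ L.idxOf p.2 < L.idxOf a)).card
        + S.card := by
  have hFeq : (L.toFinset ×ˢ L.toFinset).filter
      (fun p => L.idxOf p.1 < L.idxOf p.2
        ∧ (subsetTransfer a S L).idxOf p.2 < (subsetTransfer a S L).idxOf p.1)
      = ((S ×ˢ (L.toFinset \ insert a S)).filter
          (fun p => L.idxOf p.1 < L.idxOf p.2 ∧ L.idxOf p.2 < L.idxOf a))
        ∪ S ×ˢ {a} := by
    ext ⟨u, v⟩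
    simp only [Finset.mem_filter, Finset.mem_product, Finset.mem_union, Finset.mem_sdiff,
      Finset.mem_insert, Finset.mem_singleton, List.mem_toFinset, not_or]
    constructor
    · rintro ⟨⟨hu, hv⟩, hlt, hM⟩
      obtain ⟨huS, rfl | ⟨hvS, hvk⟩⟩ := (transfer_indexOf_iff hnd ha hS hu hv hlt).1 hM
      · exact Or.inr ⟨huS, rfl⟩
      · exact Or.inl ⟨⟨huS, hv, fun e => absurd (e ▸ hvk) (lt_irrefl _), hvS⟩, hlt, hvk⟩
    · rintro (⟨⟨huS, hv, hva, hvS⟩, hlt, hvk⟩ | ⟨huS, hva⟩)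
      · have hu : u ∈ L := (hS u huS).1
        exact ⟨⟨hu, hv⟩, hlt,
          (transfer_indexOf_iff hnd ha hS hu hv hlt).2 ⟨huS, Or.inr ⟨hvS, hvk⟩⟩⟩
      · have hu : u ∈ L := (hS u huS).1
        have hv : v ∈ L := by rw [hva]; exact ha
        have hlt : L.idxOf u < L.idxOf v := by rw [hva]; exact (hS u huS).2
        refine ⟨⟨hu, hv⟩, hlt,
          (transfer_indexOf_iff hnd ha hS hu hv hlt).2 ⟨huS, Or.inl hva⟩⟩
  have hdisj : Disjoint
      ((S ×ˢ (L.toFinset \ insert a S)).filter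
        (fun p => L.idxOf p.1 < L.idxOf p.2 ∧ L.idxOf p.2 < L.idxOf a))
      (S ×ˢ ({a} : Finset α)) := by
    rw [Finset.disjoint_left]
    rintro ⟨u, v⟩ hpE hpS
    simp only [Finset.mem_filter, Finset.mem_product, Finset.mem_sdiff, Finset.mem_insert,
      Finset.mem_singleton, not_or] at hpE hpS
    exact hpE.1.2.2.1 hpS.2
  rw [invCount, hFeq, Finset.card_union_of_disjoint hdisj, Finset.card_product,
    Finset.card_singleton, mul_one]

lemma card_I (hnd : L.Nodup) (ha : a ∈ L) {s : α} (hs : s ∈ L) :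
    (L.toFinset.filter
        (fun b => L.idxOf s < L.idxOf b ∧ L.idxOf b < L.idxOf a)).card
      = L.idxOf a - L.idxOf s - 1 := by
  rw [← Nat.card_Ioo]
  apply Finset.card_bij' (i := fun b _ => L.idxOf b)
    (j := fun n _ => L.getD n default)
  · intro b hb
    simp only [Finset.mem_filter] at hb
    exact Finset.mem_Ioo.2 hb.2
  · intro n hn
    rw [Finset.mem_Ioo] at hn
    have hnl : n < L.length := lt_trans hn.2 (List.idxOf_lt_length_iff.2 ha)
    rw [List.getD_eq_getElem _ _ hnl]
    have hidx : L.idxOf (L[n]'hnl) = n := List.Nodup.idxOf_getElem hnd _ _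
    simp only [Finset.mem_filter, List.mem_toFinset, hidx]
    exact ⟨List.getElem_mem _, hn.1, hn.2⟩
  · intro b hb
    simp only [Finset.mem_filter, List.mem_toFinset] at hb
    have hbl : L.idxOf b < L.length := List.idxOf_lt_length_iff.2 hb.1
    rw [List.getD_eq_getElem _ _ hbl]
    exact List.getElem_idxOf hbl
  · intro n hn
    rw [Finset.mem_Ioo] at hn
    have hnl : n < L.length := lt_trans hn.2 (List.idxOf_lt_length_iff.2 ha)
    rw [List.getD_eq_getElem _ _ hnl]
    exact List.Nodup.idxOf_getElem hnd _ _

lemma inter_insert_eq (hS : ∀ s ∈ S, s ∈ L ∧ L.idxOf s < L.idxOf a) {s : α} :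
    (L.toFinset.filter
        (fun b => L.idxOf s < L.idxOf b ∧ L.idxOf b < L.idxOf a)) ∩ insert a S
      = S.filter (fun s' => L.idxOf s < L.idxOf s') := by
  ext b
  simp only [Finset.mem_inter, Finset.mem_filter, Finset.mem_insert, List.mem_toFinset]
  constructor
  · rintro ⟨⟨hbL, h1, h2⟩, rfl | hbS⟩
    · omega
    · exact ⟨hbS, h1⟩
  · rintro ⟨hbS, h1⟩
    exact ⟨⟨(hS b hbS).1, h1, (hS b hbS).2⟩, Or.inr hbS⟩

lemma card_Bs (hnd : L.Nodup) (ha : a ∈ L)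
    (hS : ∀ s ∈ S, s ∈ L ∧ L.idxOf s < L.idxOf a) {s : α} (hsS : s ∈ S) :
    ((L.toFinset \ insert a S).filter
        (fun b => L.idxOf s < L.idxOf b ∧ L.idxOf b < L.idxOf a)).card + 1
      = L.idxOf a - L.idxOf s
        - (S.filter (fun s' => L.idxOf s < L.idxOf s')).card := by
  have hsL : s ∈ L := (hS s hsS).1
  have hsk : L.idxOf s < L.idxOf a := (hS s hsS).2
  set I := L.toFinset.filter
      (fun b => L.idxOf s < L.idxOf b ∧ L.idxOf b < L.idxOf a) with hI
  have hBI : (L.toFinset \ insert a S).filter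
        (fun b => L.idxOf s < L.idxOf b ∧ L.idxOf b < L.idxOf a)
      = I \ insert a S := by
    rw [hI]
    ext b
    simp only [Finset.mem_filter, Finset.mem_sdiff]
    tauto
  rw [hBI]
  have hcs : I \ insert a S = I \ (I ∩ insert a S) := by
    rw [Finset.sdiff_inter_self_left]
  rw [hcs, Finset.card_sdiff_of_subset Finset.inter_subset_left]
  have h1 : I.card = L.idxOf a - L.idxOf s - 1 := card_I hnd ha hsL
  have h2 : I ∩ insert a S = S.filter (fun s' => L.idxOf s < L.idxOf s') :=
    inter_insert_eq hS
  rw [h1, h2]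
  have h3 : (S.filter (fun s' => L.idxOf s < L.idxOf s')).card
      ≤ L.idxOf a - L.idxOf s - 1 := by
    rw [← h1, ← h2]
    exact Finset.card_le_card Finset.inter_subset_left
  omega

lemma card_E_sum (hnd : L.Nodup) (ha : a ∈ L)
    (hS : ∀ s ∈ S, s ∈ L ∧ L.idxOf s < L.idxOf a) :
    ((S ×ˢ (L.toFinset \ insert a S)).filter
        (fun p => L.idxOf p.1 < L.idxOf p.2 ∧ L.idxOf p.2 < L.idxOf a)).card
      = ∑ s ∈ S, ((L.toFinset \ insert a S).filter
          (fun b => L.idxOf s < L.idxOf b ∧ L.idxOf b < L.idxOf a)).card := by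
  rw [Finset.card_eq_sum_card_fiberwise (f := Prod.fst) (t := S)
    (fun p hp => (Finset.mem_product.1 (Finset.mem_filter.1 hp).1).1)]
  apply Finset.sum_congr rfl
  intro s hsS
  apply Finset.card_bij (i := fun p _ => p.2)
  · rintro ⟨u, v⟩ hp
    simp only [Finset.mem_filter, Finset.mem_product] at hp
    obtain ⟨⟨⟨huS, hv⟩, h1, h2⟩, rfl⟩ := hp
    exact Finset.mem_filter.2 ⟨hv, h1, h2⟩
  · rintro ⟨u, v⟩ hp ⟨u', v'⟩ hp' h
    simp only [Finset.mem_filter] at hp hp'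
    obtain ⟨-, rfl⟩ := hp
    obtain ⟨-, rfl⟩ := hp'
    simp only at h
    rw [h]
  · intro b hb
    rw [Finset.mem_filter] at hb
    refine ⟨(s, b), ?_, rfl⟩
    simp only [Finset.mem_filter, Finset.mem_product]
    exact ⟨⟨⟨hsS, hb.1⟩, hb.2⟩, trivial⟩

end Counting

/-- A subset transfer with respect to an item `a` (at position `k = indexOf a`)
and a set `S` of items preceding `a` uses exactly
`Σ_{s ∈ S} (k − pos(s) − |{s' ∈ S : s' between s and a}|)` adjacent transpositions;
equivalently its cost equals the number of pairs `(s, b)` with `s ∈ S`, `b ∉ S ∪ {a}`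
strictly between `s` and `a`, plus `|S|`; and concretely this cost is the number of
inversions between the original list and the resulting list, which is the minimal
number of adjacent transpositions realizing the reorganization. -/
theorem subsetTransfer_cost (L : List α) (a : α) (S : Finset α)
    (hnd : L.Nodup) (ha : a ∈ L)
    (hS : ∀ s ∈ S, s ∈ L ∧ L.idxOf s < L.idxOf a) :
    invCount L (subsetTransfer a S L)
        = ∑ s ∈ S, (L.idxOf a - L.idxOf s
            - (S.filter (fun s' => L.idxOf s < L.idxOf s')).card)
      ∧ invCount L (subsetTransfer a S L)
        = ((S ×ˢ (L.toFinset \ insert a S)).filter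
            (fun p => L.idxOf p.1 < L.idxOf p.2 ∧ L.idxOf p.2 < L.idxOf a)).card
          + S.card
      ∧ IsLeast {n : ℕ | ∃ ops : List ℕ, ops.length = n ∧ applySwaps ops L = subsetTransfer a S L}
          (invCount L (subsetTransfer a S L)) := by
  have h2 := invCount_transfer_eq2 hnd ha hS
  have h1 : invCount L (subsetTransfer a S L)
      = ∑ s ∈ S, (L.idxOf a - L.idxOf s
          - (S.filter (fun s' => L.idxOf s < L.idxOf s')).card) := by
    calc invCount L (subsetTransfer a S L)
        = (∑ s ∈ S, ((L.toFinset \ insert a S).filter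
            (fun b => L.idxOf s < L.idxOf b ∧ L.idxOf b < L.idxOf a)).card)
          + S.card := by rw [h2, card_E_sum hnd ha hS]
      _ = ∑ s ∈ S, (((L.toFinset \ insert a S).filter
            (fun b => L.idxOf s < L.idxOf b ∧ L.idxOf b < L.idxOf a)).card + 1) := by
          rw [Finset.sum_add_distrib, Finset.sum_const, smul_eq_mul, mul_one]
      _ = ∑ s ∈ S, (L.idxOf a - L.idxOf s
            - (S.filter (fun s' => L.idxOf s < L.idxOf s')).card) :=
          Finset.sum_congr rfl (fun s hs => card_Bs hnd ha hS hs)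
  refine ⟨h1, h2, ?_, ?_⟩
  · obtain ⟨ops, hlen, happ⟩ := exists_ops (subsetTransfer a S L)
      (invCount L (subsetTransfer a S L)) L hnd (subsetTransfer_perm hnd ha).symm rfl
    exact ⟨ops, hlen, happ⟩
  · rintro n ⟨ops, hlen, happ⟩
    exact hlen ▸ lower_bound _ ops L hnd happ
end

section
/- In the action network AN(σ), the length (total arc cost) of any s–t path equals the total reorganization cost of the corresponding offline strategy (initial permutation followed by m element transfers), and hence the shortest s–t path length plus the corresponding access costs equals the optimal offline cost of serving σ. -/
set_option maxHeartbeats 1000000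
set_option linter.unusedSectionVars false


open Finset

variable {α : Type*} [DecidableEq α] [Inhabited α]

/-- Configurations of a general offline strategy: `gconf ρ0 ops i` is the list before the
reorganization `ops i` preceding the `i`-th access; request `σ i` is accessed in the list
`gconf ρ0 ops (i+1) = applySwaps (ops i) (gconf ρ0 ops i)`. -/
def gconf (ρ0 : List α) (ops : ℕ → List ℕ) : ℕ → List α
  | 0 => ρ0
  | i + 1 => applySwaps (ops i) (gconf ρ0 ops i)

/-- Total cost (all transpositions charged, access to position `p` costs `p+1`) of a
general offline strategy serving the `m` requests `σ 0, …, σ (m-1)`. -/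
def gcost (ρ0 : List α) (σ : ℕ → α) (m : ℕ) (ops : ℕ → List ℕ) : ℕ :=
  ∑ i ∈ Finset.range m, ((ops i).length + (gconf ρ0 ops (i + 1)).idxOf (σ i) + 1)

/-- The set of costs achievable by general offline strategies. -/
def GenCosts (ρ0 : List α) (σ : ℕ → α) (m : ℕ) : Set ℕ :=
  {c | ∃ ops : ℕ → List ℕ, c = gcost ρ0 σ m ops}

/-- Configurations of an element-transfer strategy: start from `ρ1` (a permutation of the
initial list) and serve request `i` by an element transfer moving `σ i` to position `js i`. -/
def econf (ρ1 : List α) (σ : ℕ → α) (js : ℕ → ℕ) : ℕ → List α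
  | 0 => ρ1
  | i + 1 =>
      let M := econf ρ1 σ js i
      elemTransfer (M.idxOf (σ i)) (js i) M

/-- Total cost of an element-transfer strategy: the initial permutation costs its number of
inversions relative to `ρ0`; serving request `i` costs `|kᵢ − js i|` transpositions plus the
access cost at the new position. -/
def ecost (ρ0 ρ1 : List α) (σ : ℕ → α) (m : ℕ) (js : ℕ → ℕ) : ℕ :=
  invCount ρ0 ρ1 +
    ∑ i ∈ Finset.range m,
      ((max ((econf ρ1 σ js i).idxOf (σ i)) (js i)
          - min ((econf ρ1 σ js i).idxOf (σ i)) (js i))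
        + (econf ρ1 σ js (i + 1)).idxOf (σ i) + 1)

/-- The set of costs achievable by strategies that first permute the list and then serve
each request with a single element transfer followed by the access. -/
def ETCosts (ρ0 : List α) (σ : ℕ → α) (m : ℕ) : Set ℕ :=
  {c | ∃ (ρ1 : List α) (js : ℕ → ℕ), ρ0.Perm ρ1 ∧ (∀ i < m, js i < ρ0.length) ∧
        c = ecost ρ0 ρ1 σ m js}

/-- Configurations of a subset-transfer strategy: request `i` is served by the subset
transfer moving `Ss i` to just behind `σ i`, followed by the access. -/
def sconf (ρ0 : List α) (σ : ℕ → α) (Ss : ℕ → Finset α) : ℕ → List α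
  | 0 => ρ0
  | i + 1 => subsetTransfer (σ i) (Ss i) (sconf ρ0 σ Ss i)

/-- Total cost of a subset-transfer strategy. -/
def scost (ρ0 : List α) (σ : ℕ → α) (m : ℕ) (Ss : ℕ → Finset α) : ℕ :=
  ∑ i ∈ Finset.range m,
    (invCount (sconf ρ0 σ Ss i) (sconf ρ0 σ Ss (i + 1))
      + (sconf ρ0 σ Ss (i + 1)).idxOf (σ i) + 1)

/-- The set of costs achievable by subset-transfer strategies. -/
def STCosts (ρ0 : List α) (σ : ℕ → α) (m : ℕ) : Set ℕ :=
  {c | ∃ Ss : ℕ → Finset α,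
        (∀ i < m, ∀ s ∈ Ss i,
          (sconf ρ0 σ Ss i).idxOf s < (sconf ρ0 σ Ss i).idxOf (σ i)) ∧
        c = scost ρ0 σ m Ss}

/-- An `s`–`t` path of the action network `AN(σ)`, recorded by its layer configurations:
`g i` is the ordering at the layer-`i` node (`1 ≤ i ≤ m`), in which request `σ (i-1)` is
accessed.  The first arc chooses an arbitrary permutation `g 1` of `ρ0`; the arc from layer
`i` to layer `i+1` is an element transfer with respect to the next requested item. -/
def IsANPath (ρ0 : List α) (σ : ℕ → α) (l m : ℕ) (g : ℕ → List α) : Prop :=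
  ρ0.Perm (g 1) ∧
    ∀ i, 1 ≤ i → i < m →
      ∃ j < l, g (i + 1) = elemTransfer ((g i).idxOf (σ i)) j (g i)

/-- The total arc cost of an `s`–`t` path: the `s`-arc costs the number of inversions
between `ρ0` and `g 1`, a middle arc costs the number of inversions of the corresponding
element transfer, and arcs into `t` cost `0`. -/
def pathArcCost (ρ0 : List α) (σ : ℕ → α) (m : ℕ) (g : ℕ → List α) : ℕ :=
  invCount ρ0 (g 1) + ∑ i ∈ Finset.Ico 1 m, invCount (g i) (g (i + 1))

/-- The total access cost along a path: `σ (i-1)` is accessed in the layer-`i` configuration. -/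
def pathAccessCost (σ : ℕ → α) (m : ℕ) (g : ℕ → List α) : ℕ :=
  ∑ i ∈ Finset.Icc 1 m, ((g i).idxOf (σ (i - 1)) + 1)


section AuxProofs
open List

lemma insertIdx_eq_take_cons_drop (x : α) : ∀ (n : ℕ) (l : List α), n ≤ l.length →
    l.insertIdx n x = l.take n ++ x :: l.drop n
  | 0, l, _ => by simp [insertIdx_zero]
  | n+1, [], h => by simp at h
  | n+1, a :: l, h => by
      simp only [insertIdx_succ_cons, take_succ_cons, drop_succ_cons, cons_append]
      rw [insertIdx_eq_take_cons_drop x n l (by simpa using h)]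

lemma take_cons_drop (L : List α) (k : ℕ) (h : k < L.length) :
    L.take k ++ L[k] :: L.drop (k+1) = L := by
  rw [getElem_cons_drop, take_append_drop]

lemma insertIdx_append_cons_left (A B : List α) (x : α) {j : ℕ} (hj : j ≤ A.length) :
    (A ++ B).insertIdx j x = A.take j ++ x :: (A.drop j ++ B) := by
  rw [insertIdx_eq_take_cons_drop _ _ _ (by simp; omega),
    take_append_of_le_length hj, drop_append_of_le_length hj]

lemma insertIdx_append_right (A B : List α) (x : α) {t : ℕ} (ht : t ≤ B.length) :
    (A ++ B).insertIdx (A.length + t) x = (A ++ B.take t) ++ x :: B.drop t := by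
  rw [insertIdx_eq_take_cons_drop _ _ _ (by simp; omega), take_append, drop_append,
    append_assoc]
  rw [take_of_length_le (by omega), drop_of_length_le (by omega), nil_append,
    Nat.add_sub_cancel_left, append_assoc]

lemma elemTransfer_left {L : List α} {k j : ℕ} (hk : k < L.length) (hj : j ≤ k) :
    elemTransfer k j L
      = (L.take k).take j ++ L[k] :: ((L.take k).drop j ++ L.drop (k+1)) := by
  have hlen : (L.take k).length = k := by simp [le_of_lt hk]
  rw [elemTransfer, getD_eq_getElem _ _ hk, eraseIdx_eq_take_drop_succ,
    insertIdx_append_cons_left _ _ _ (by omega)]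

lemma elemTransfer_right {L : List α} {k j : ℕ} (hk : k < L.length) (hkj : k ≤ j)
    (hj : j < L.length) :
    elemTransfer k j L
      = (L.take k ++ (L.drop (k+1)).take (j - k)) ++ L[k] :: (L.drop (k+1)).drop (j - k) := by
  have hlen : (L.take k).length = k := by simp [le_of_lt hk]
  have hlen2 : (L.drop (k+1)).length = L.length - (k+1) := by simp
  have hjj : j = (L.take k).length + (j - k) := by omega
  rw [elemTransfer, getD_eq_getElem _ _ hk, eraseIdx_eq_take_drop_succ, hjj,
    insertIdx_append_right _ _ _ (by omega)]
  simp [hlen]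

lemma elemTransfer_self {L : List α} {k : ℕ} (hk : k < L.length) :
    elemTransfer k k L = L := by
  have hlen : (L.take k).length = k := by simp [le_of_lt hk]
  rw [elemTransfer_left hk (le_refl k), take_of_length_le (by omega),
    drop_of_length_le (by omega), nil_append, take_cons_drop L k hk]

lemma elemTransfer_perm {L : List α} {k j : ℕ} (hk : k < L.length) (hj : j < L.length) :
    L.Perm (elemTransfer k j L) := by
  rw [elemTransfer, getD_eq_getElem _ _ hk]
  have h1 : (L.eraseIdx k).insertIdx j L[k] ~ L[k] :: L.eraseIdx k :=
    perm_insertIdx _ _ (by rw [length_eraseIdx_of_lt hk]; omega)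
  refine ((?_ : L ~ L[k] :: L.eraseIdx k).trans h1.symm)
  conv_lhs => rw [← take_cons_drop L k hk]
  rw [eraseIdx_eq_take_drop_succ]
  exact perm_middle

lemma invCount_comm {L M : List α} (h : L.Perm M) : invCount L M = invCount M L := by
  unfold invCount
  rw [List.toFinset_eq_of_perm _ _ h]
  apply Finset.card_bij' (fun p _ => (p.2, p.1)) (fun p _ => (p.2, p.1)) <;>
    · rintro ⟨a, b⟩ hab
      simp only [Finset.mem_filter, Finset.mem_product] at hab ⊢
      try tauto

lemma invCount_triangle {L M N : List α} (h : L.Perm M) :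
    invCount L N ≤ invCount L M + invCount M N := by
  unfold invCount
  rw [(show M.toFinset = L.toFinset from (List.toFinset_eq_of_perm _ _ h).symm)]
  refine le_trans (Finset.card_le_card ?_) (Finset.card_union_le _ _)
  intro ⟨a, b⟩ hab
  simp only [Finset.mem_filter, Finset.mem_product, Finset.mem_union] at hab ⊢
  obtain ⟨⟨ha, hb⟩, h1, h2⟩ := hab
  have hb' : b ∈ M := h.mem_iff.1 (List.mem_toFinset.1 hb)
  have ha' : a ∈ M := h.mem_iff.1 (List.mem_toFinset.1 ha)
  rcases lt_trichotomy (M.idxOf a) (M.idxOf b) with hlt | heq | hgt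
  · exact Or.inr ⟨⟨ha, hb⟩, hlt, h2⟩
  · exact absurd ((List.idxOf_inj ha').1 heq) (by rintro rfl; omega)
  · exact Or.inl ⟨⟨ha, hb⟩, h1, hgt⟩

lemma invCount_move_left (A₁ A₂ B : List α) (x : α)
    (h : (A₁ ++ A₂ ++ x :: B).Nodup) :
    invCount (A₁ ++ A₂ ++ x :: B) (A₁ ++ x :: (A₂ ++ B)) = A₂.length := by
  set L := A₁ ++ A₂ ++ x :: B with hL
  set M := A₁ ++ x :: (A₂ ++ B) with hM
  obtain ⟨h12, h4, d⟩ := List.nodup_append.1 h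
  obtain ⟨h1, h3, d12⟩ := List.nodup_append.1 h12
  obtain ⟨hxB, h5⟩ := List.nodup_cons.1 h4
  have hxA1 : x ∉ A₁ := fun hx => d x (List.mem_append.2 (Or.inl hx)) x (by simp) rfl
  have hxA2 : x ∉ A₂ := fun hx => d x (List.mem_append.2 (Or.inr hx)) x (by simp) rfl
  have hxA12 : x ∉ A₁ ++ A₂ := by simp [hxA1, hxA2]
  have hA2A1 : ∀ y ∈ A₂, y ∉ A₁ := fun y hy h' => d12 y h' y hy rfl
  have hBA1 : ∀ y ∈ B, y ∉ A₁ := fun y hy h' =>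
    d y (List.mem_append.2 (Or.inl h')) y (by simp [hy]) rfl
  have hBA2 : ∀ y ∈ B, y ∉ A₂ := fun y hy h' =>
    d y (List.mem_append.2 (Or.inr h')) y (by simp [hy]) rfl
  have hBA12 : ∀ y ∈ B, y ∉ A₁ ++ A₂ := by simp only [List.mem_append]; tauto
  have hBx : ∀ y ∈ B, x ≠ y := fun y hy h' => hxB (h' ▸ hy)
  have hA2x : ∀ y ∈ A₂, x ≠ y := fun y hy h' => hxA2 (h' ▸ hy)
  set n₁ := A₁.length with hn₁
  set n₂ := A₂.length with hn₂
  have hlen12 : (A₁ ++ A₂).length = n₁ + n₂ := by simp [hn₁, hn₂]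
  have bA1 : ∀ y ∈ A₁, List.idxOf y A₁ < n₁ := fun y hy => List.idxOf_lt_length_iff.2 hy
  have bA2 : ∀ y ∈ A₂, List.idxOf y A₂ < n₂ := fun y hy => List.idxOf_lt_length_iff.2 hy
  have iL1 : ∀ y ∈ A₁, List.idxOf y L = List.idxOf y A₁ := fun y hy => by
    rw [hL, List.idxOf_append_of_mem (List.mem_append.2 (Or.inl hy)),
      List.idxOf_append_of_mem hy]
  have iL2 : ∀ y ∈ A₂, List.idxOf y L = n₁ + List.idxOf y A₂ := fun y hy => by
    rw [hL, List.idxOf_append_of_mem (List.mem_append.2 (Or.inr hy)),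
      List.idxOf_append_of_notMem (hA2A1 y hy)]
  have iLx : List.idxOf x L = n₁ + n₂ := by
    rw [hL, List.idxOf_append_of_notMem hxA12, List.idxOf_cons_self, hlen12]
    omega
  have iLB : ∀ y ∈ B, List.idxOf y L = (n₁ + n₂) + (List.idxOf y B + 1) := fun y hy => by
    rw [hL, List.idxOf_append_of_notMem (hBA12 y hy), List.idxOf_cons_ne _ (hBx y hy),
      hlen12]
  have iM1 : ∀ y ∈ A₁, List.idxOf y M = List.idxOf y A₁ := fun y hy => by
    rw [hM, List.idxOf_append_of_mem hy]
  have iMx : List.idxOf x M = n₁ := by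
    rw [hM, List.idxOf_append_of_notMem hxA1, List.idxOf_cons_self]
    omega
  have iM2 : ∀ y ∈ A₂, List.idxOf y M = n₁ + (List.idxOf y A₂ + 1) := fun y hy => by
    rw [hM, List.idxOf_append_of_notMem (hA2A1 y hy), List.idxOf_cons_ne _ (hA2x y hy),
      List.idxOf_append_of_mem hy]
  have iMB : ∀ y ∈ B, List.idxOf y M = n₁ + ((n₂ + List.idxOf y B) + 1) := fun y hy => by
    rw [hM, List.idxOf_append_of_notMem (hBA1 y hy), List.idxOf_cons_ne _ (hBx y hy),
      List.idxOf_append_of_notMem (hBA2 y hy), hn₂]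
  have hset : ((L.toFinset ×ˢ L.toFinset).filter
      (fun p => L.idxOf p.1 < L.idxOf p.2 ∧ M.idxOf p.2 < M.idxOf p.1))
      = A₂.toFinset.image (fun y => (y, x)) := by
    ext ⟨p, q⟩
    simp only [Finset.mem_filter, Finset.mem_product, List.mem_toFinset, Finset.mem_image,
      Prod.mk.injEq]
    constructor
    · rintro ⟨⟨hp, hq⟩, h1p, h2p⟩
      rw [hL] at hp hq
      simp only [List.mem_append, List.mem_cons] at hp hq
      rcases hp with (hp | hp) | hp | hp <;> rcases hq with (hq | hq) | hq | hq
      · rw [iL1 _ hp, iL1 _ hq] at h1p; rw [iM1 _ hp, iM1 _ hq] at h2p; omega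
      · rw [iL1 _ hp] at h1p; rw [iM1 _ hp, iM2 _ hq] at h2p
        have := bA1 _ hp; omega
      · subst hq; rw [iM1 _ hp, iMx] at h2p; have := bA1 _ hp; omega
      · rw [iM1 _ hp, iMB _ hq] at h2p; have := bA1 _ hp; omega
      · rw [iL2 _ hp, iL1 _ hq] at h1p; have := bA1 _ hq; omega
      · rw [iL2 _ hp, iL2 _ hq] at h1p; rw [iM2 _ hp, iM2 _ hq] at h2p; omega
      · exact ⟨p, hp, rfl, hq.symm⟩
      · rw [iL2 _ hp, iLB _ hq] at h1p; rw [iM2 _ hp, iMB _ hq] at h2p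
        have := bA2 _ hp; omega
      · subst hp; rw [iLx, iL1 _ hq] at h1p; have := bA1 _ hq; omega
      · subst hp; rw [iLx, iL2 _ hq] at h1p; have := bA2 _ hq; omega
      · subst hp; subst hq; omega
      · subst hp; rw [iMx, iMB _ hq] at h2p; omega
      · rw [iLB _ hp, iL1 _ hq] at h1p; have := bA1 _ hq; omega
      · rw [iLB _ hp, iL2 _ hq] at h1p; have := bA2 _ hq; omega
      · subst hq; rw [iLB _ hp, iLx] at h1p; omega
      · rw [iLB _ hp, iLB _ hq] at h1p; rw [iMB _ hp, iMB _ hq] at h2p; omega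
    · rintro ⟨y, hy, rfl, rfl⟩
      have hb := bA2 _ hy
      refine ⟨⟨?_, ?_⟩, ?_, ?_⟩
      · rw [hL]; simp [hy]
      · rw [hL]; simp
      · rw [iL2 _ hy, iLx]; omega
      · rw [iMx, iM2 _ hy]; omega
  rw [invCount, hset,
    Finset.card_image_of_injective _ (fun a b hab => (Prod.mk.injEq _ _ _ _ ▸ hab).1),
    List.toFinset_card_of_nodup h3]

lemma invCount_elemTransfer {L : List α} (hnd : L.Nodup) {k j : ℕ} (hk : k < L.length)
    (hj : j < L.length) : invCount L (elemTransfer k j L) = max k j - min k j := by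
  have hA : (L.take k).length = k := by simp [le_of_lt hk]
  rcases le_total j k with hjk | hkj
  · have hLeq : (L.take k).take j ++ (L.take k).drop j ++ L[k] :: L.drop (k+1) = L := by
      rw [take_append_drop, take_cons_drop L k hk]
    rw [elemTransfer_left hk hjk]
    have := invCount_move_left ((L.take k).take j) ((L.take k).drop j) (L.drop (k+1)) L[k]
      (by rw [hLeq]; exact hnd)
    rw [hLeq] at this
    rw [this, length_drop, hA]
    omega
  · have hM := elemTransfer_right hk hkj hj
    have hperm := elemTransfer_perm (L := L) hk hj
    rw [invCount_comm hperm, hM]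
    have hLeq : L.take k ++ L[k] :: ((L.drop (k+1)).take (j-k) ++ (L.drop (k+1)).drop (j-k))
        = L := by rw [take_append_drop, take_cons_drop L k hk]
    have := invCount_move_left (L.take k) ((L.drop (k+1)).take (j-k)) ((L.drop (k+1)).drop (j-k))
      L[k] (by rw [← hM]; exact hperm.nodup hnd)
    rw [hLeq] at this
    rw [this, length_take, length_drop]
    omega

variable {ρ0 ρ1 : List α} {σ : ℕ → α} {js : ℕ → ℕ} {m : ℕ}

lemma econf_perm (hσ : ∀ i, σ i ∈ ρ0) (hρ1 : ρ0.Perm ρ1)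
    (hjs : ∀ i < m, js i < ρ0.length) :
    ∀ i ≤ m, ρ0.Perm (econf ρ1 σ js i) := by
  intro i
  induction i with
  | zero => exact fun _ => hρ1
  | succ n ih =>
    intro hn
    have hp := ih (by omega)
    have hk : (econf ρ1 σ js n).idxOf (σ n) < (econf ρ1 σ js n).length :=
      List.idxOf_lt_length_iff.2 (hp.mem_iff.1 (hσ n))
    have hj : js n < (econf ρ1 σ js n).length := hp.length_eq ▸ hjs n (by omega)
    exact hp.trans (elemTransfer_perm hk hj)

lemma econf_arc (hnd : ρ0.Nodup) (hσ : ∀ i, σ i ∈ ρ0) (hρ1 : ρ0.Perm ρ1)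
    (hjs : ∀ i < m, js i < ρ0.length) :
    ∀ i < m, invCount (econf ρ1 σ js i) (econf ρ1 σ js (i + 1))
      = max ((econf ρ1 σ js i).idxOf (σ i)) (js i)
          - min ((econf ρ1 σ js i).idxOf (σ i)) (js i) := by
  intro i hi
  have hp := econf_perm hσ hρ1 hjs i (by omega)
  have hk : (econf ρ1 σ js i).idxOf (σ i) < (econf ρ1 σ js i).length :=
    List.idxOf_lt_length_iff.2 (hp.mem_iff.1 (hσ i))
  have hj : js i < (econf ρ1 σ js i).length := hp.length_eq ▸ hjs i hi
  exact invCount_elemTransfer (hp.nodup hnd) hk hj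

lemma ecost_eq (hm : 1 ≤ m) (hnd : ρ0.Nodup) (hσ : ∀ i, σ i ∈ ρ0) (hρ1 : ρ0.Perm ρ1)
    (hjs : ∀ i < m, js i < ρ0.length) :
    ecost ρ0 ρ1 σ m js
      = invCount ρ0 ρ1
        + (max (ρ1.idxOf (σ 0)) (js 0) - min (ρ1.idxOf (σ 0)) (js 0))
        + (∑ i ∈ Finset.Ico 1 m, invCount (econf ρ1 σ js i) (econf ρ1 σ js (i + 1))
            + ∑ i ∈ Finset.Icc 1 m, ((econf ρ1 σ js i).idxOf (σ (i - 1)) + 1)) := by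
  obtain ⟨n, rfl⟩ : ∃ n, m = n + 1 := ⟨m - 1, by omega⟩
  have harc := econf_arc hnd hσ hρ1 hjs
  set Δ : ℕ → ℕ := fun i => max ((econf ρ1 σ js i).idxOf (σ i)) (js i)
      - min ((econf ρ1 σ js i).idxOf (σ i)) (js i) with hΔ
  set acc : ℕ → ℕ := fun i => (econf ρ1 σ js (i + 1)).idxOf (σ i) + 1 with hacc
  have e0 : ecost ρ0 ρ1 σ (n + 1) js
      = invCount ρ0 ρ1 + (∑ i ∈ Finset.range (n + 1), Δ i
          + ∑ i ∈ Finset.range (n + 1), acc i) := by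
    rw [ecost, ← Finset.sum_add_distrib]
    exact congrArg _ (Finset.sum_congr rfl fun i _ => by simp only [hΔ, hacc]; omega)
  have e1 : ∑ i ∈ Finset.range (n + 1), Δ i
      = ∑ i ∈ Finset.range n, Δ (i + 1) + Δ 0 := Finset.sum_range_succ' Δ n
  have e2 : ∑ i ∈ Finset.Ico 1 (n + 1), invCount (econf ρ1 σ js i) (econf ρ1 σ js (i + 1))
      = ∑ i ∈ Finset.range n, Δ (i + 1) := by
    rw [Finset.sum_Ico_eq_sum_range]
    refine Finset.sum_congr (by norm_num) fun i hi => ?_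
    rw [Finset.mem_range] at hi
    rw [show 1 + i = i + 1 by omega, harc (i + 1) (by omega)]
  have e3 : ∑ i ∈ Finset.Icc 1 (n + 1), ((econf ρ1 σ js i).idxOf (σ (i - 1)) + 1)
      = ∑ i ∈ Finset.range (n + 1), acc i := by
    rw [← Finset.Ico_add_one_right_eq_Icc, Finset.sum_Ico_eq_sum_range]
    refine Finset.sum_congr (by norm_num) fun i hi => ?_
    rw [show 1 + i = i + 1 by omega]
    simp [hacc]
  have hΔ0 : Δ 0 = max (ρ1.idxOf (σ 0)) (js 0) - min (ρ1.idxOf (σ 0)) (js 0) := rfl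
  omega

lemma pathcost_le_ecost (hm : 1 ≤ m) (hnd : ρ0.Nodup) (hσ : ∀ i, σ i ∈ ρ0)
    (hρ1 : ρ0.Perm ρ1) (hjs : ∀ i < m, js i < ρ0.length) :
    pathArcCost ρ0 σ m (econf ρ1 σ js) + pathAccessCost σ m (econf ρ1 σ js)
      ≤ ecost ρ0 ρ1 σ m js := by
  rw [ecost_eq hm hnd hσ hρ1 hjs, pathArcCost, pathAccessCost]
  have harc0 := econf_arc hnd hσ hρ1 hjs 0 (by omega)
  have htri : invCount ρ0 (econf ρ1 σ js 1)
      ≤ invCount ρ0 ρ1 + invCount ρ1 (econf ρ1 σ js 1) := invCount_triangle hρ1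
  have h1 : invCount ρ1 (econf ρ1 σ js 1)
      = max (ρ1.idxOf (σ 0)) (js 0) - min (ρ1.idxOf (σ 0)) (js 0) := harc0
  omega

end AuxProofs

/-- In the action network `AN(σ)`: (i) the total arc cost of any `s`–`t`
path equals the total reorganization cost of the corresponding offline strategy — each
middle arc costs exactly the `|k − j|` adjacent transpositions of its element transfer —
and (ii) given the characterization theorem (some optimal offline solution is an initial
permutation followed by `m` element transfers), the minimum over `s`–`t` paths of arc cost
plus access cost equals the optimal offline cost of serving `σ`. -/
theorem actionNetwork_shortest_path (ρ0 : List α) (σ : ℕ → α) (l m : ℕ)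
    (hnd : ρ0.Nodup) (hlen : ρ0.length = l) (hl : 0 < l) (hm : 1 ≤ m)
    (hσ : ∀ i, σ i ∈ ρ0)
    (hChar : sInf (ETCosts ρ0 σ m) = sInf (GenCosts ρ0 σ m)) :
    (∀ g : ℕ → List α, IsANPath ρ0 σ l m g →
        ∀ i, 1 ≤ i → i < m → ∀ j < l,
          g (i + 1) = elemTransfer ((g i).idxOf (σ i)) j (g i) →
          invCount (g i) (g (i + 1))
            = max ((g i).idxOf (σ i)) j - min ((g i).idxOf (σ i)) j)
    ∧ sInf {c : ℕ | ∃ g : ℕ → List α, IsANPath ρ0 σ l m g ∧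
          c = pathArcCost ρ0 σ m g + pathAccessCost σ m g}
        = sInf (GenCosts ρ0 σ m) := by
  have hpath_perm : ∀ g, IsANPath ρ0 σ l m g → ∀ i, 1 ≤ i → i ≤ m → ρ0.Perm (g i) := by
    intro g hg i
    induction i with
    | zero => intro h _; exact absurd h (by omega)
    | succ n ih =>
      intro _ h2
      by_cases hn : n = 0
      · subst hn; exact hg.1
      · have h1n : 1 ≤ n := by omega
        have hnm : n < m := by omega
        obtain ⟨j, hj, heq⟩ := hg.2 n h1n hnm
        have hp := ih h1n (by omega)
        have hk : (g n).idxOf (σ n) < (g n).length :=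
          List.idxOf_lt_length_iff.2 (hp.mem_iff.1 (hσ n))
        have hjlen : j < (g n).length := by rw [← hp.length_eq, hlen]; exact hj
        exact hp.trans (heq ▸ elemTransfer_perm hk hjlen)
  constructor
  · intro g hg i h1 h2 j hj heq
    have hp := hpath_perm g hg i h1 (by omega)
    have hk : (g i).idxOf (σ i) < (g i).length :=
      List.idxOf_lt_length_iff.2 (hp.mem_iff.1 (hσ i))
    have hjlen : j < (g i).length := by rw [← hp.length_eq, hlen]; exact hj
    rw [heq]
    exact invCount_elemTransfer (hp.nodup hnd) hk hjlen
  · rw [← hChar]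
    have hA : ∀ c ∈ {c : ℕ | ∃ g : ℕ → List α, IsANPath ρ0 σ l m g ∧
          c = pathArcCost ρ0 σ m g + pathAccessCost σ m g}, c ∈ ETCosts ρ0 σ m := by
      rintro c ⟨g, hg, rfl⟩
      set js : ℕ → ℕ := fun i => if h : 1 ≤ i ∧ i < m then Classical.choose (hg.2 i h.1 h.2)
        else (g 1).idxOf (σ 0) with hjsdef
      have hjs0 : js 0 = (g 1).idxOf (σ 0) := by simp [hjsdef]
      have hspec : ∀ i (h1 : 1 ≤ i) (h2 : i < m),
          js i < l ∧ g (i + 1) = elemTransfer ((g i).idxOf (σ i)) (js i) (g i) := by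
        intro i h1 h2
        have : js i = Classical.choose (hg.2 i h1 h2) := by simp [hjsdef, h1, h2]
        rw [this]
        exact Classical.choose_spec (hg.2 i h1 h2)
      have hjs : ∀ i < m, js i < ρ0.length := by
        intro i him
        by_cases h1 : 1 ≤ i
        · rw [hlen]; exact (hspec i h1 him).1
        · have hi0 : i = 0 := by omega
          subst hi0
          rw [hjs0, hg.1.length_eq]
          exact List.idxOf_lt_length_iff.2 (hg.1.mem_iff.1 (hσ 0))
      have hgeq : ∀ i, 1 ≤ i → i ≤ m → econf (g 1) σ js i = g i := by
        intro i
        induction i with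
        | zero => intro h _; exact absurd h (by omega)
        | succ n ih =>
          intro _ h2
          by_cases hn : n = 0
          · subst hn
            show elemTransfer ((g 1).idxOf (σ 0)) (js 0) (g 1) = g 1
            rw [hjs0]
            exact elemTransfer_self (List.idxOf_lt_length_iff.2 (hg.1.mem_iff.1 (hσ 0)))
          · have h1n : 1 ≤ n := by omega
            have hnm : n < m := by omega
            have hstep := (hspec n h1n hnm).2
            show elemTransfer ((econf (g 1) σ js n).idxOf (σ n)) (js n)
              (econf (g 1) σ js n) = g (n + 1)
            rw [ih h1n (by omega), ← hstep]
      refine ⟨g 1, js, hg.1, hjs, ?_⟩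
      rw [ecost_eq hm hnd hσ hg.1 hjs]
      have hΔ0 : max ((g 1).idxOf (σ 0)) (js 0) - min ((g 1).idxOf (σ 0)) (js 0) = 0 := by
        rw [hjs0]; omega
      rw [pathArcCost, pathAccessCost, hΔ0]
      have hsum1 : ∑ i ∈ Finset.Ico 1 m, invCount (g i) (g (i + 1))
          = ∑ i ∈ Finset.Ico 1 m,
              invCount (econf (g 1) σ js i) (econf (g 1) σ js (i + 1)) := by
        refine Finset.sum_congr rfl fun i hi => ?_
        rw [Finset.mem_Ico] at hi
        rw [hgeq i hi.1 (by omega), hgeq (i + 1) (by omega) (by omega)]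
      have hsum2 : ∑ i ∈ Finset.Icc 1 m, ((g i).idxOf (σ (i - 1)) + 1)
          = ∑ i ∈ Finset.Icc 1 m, ((econf (g 1) σ js i).idxOf (σ (i - 1)) + 1) := by
        refine Finset.sum_congr rfl fun i hi => ?_
        rw [Finset.mem_Icc] at hi
        rw [hgeq i hi.1 hi.2]
      omega
    have hB : ∀ c ∈ ETCosts ρ0 σ m, ∃ c' ∈ {c : ℕ | ∃ g : ℕ → List α, IsANPath ρ0 σ l m g ∧
          c = pathArcCost ρ0 σ m g + pathAccessCost σ m g}, c' ≤ c := by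
      rintro c ⟨ρ1, js, hρ1, hjs, rfl⟩
      refine ⟨pathArcCost ρ0 σ m (econf ρ1 σ js) + pathAccessCost σ m (econf ρ1 σ js),
        ⟨econf ρ1 σ js, ⟨econf_perm hσ hρ1 hjs 1 hm, ?_⟩, rfl⟩,
        pathcost_le_ecost hm hnd hσ hρ1 hjs⟩
      intro i h1 h2
      exact ⟨js i, hlen ▸ hjs i h2, rfl⟩
    have hETne : (ETCosts ρ0 σ m).Nonempty :=
      ⟨_, ρ0, fun _ => 0, List.Perm.refl ρ0, fun i _ => by rw [hlen]; exact hl, rfl⟩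
    obtain ⟨c0, hc0P, _⟩ := hB _ (Nat.sInf_mem hETne)
    apply le_antisymm
    · obtain ⟨c', hc'P, hle⟩ := hB _ (Nat.sInf_mem hETne)
      exact le_trans (Nat.sInf_le hc'P) hle
    · exact Nat.sInf_le (hA _ (Nat.sInf_mem ⟨c0, hc0P⟩))
end
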